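/- Let η = diag(1,…,1,−1,…,−1) be a fixed signature matrix, and let K, K' : [0,1] → 𝔰𝔬(n) be continuous. Let X : [0,1] → GL(n,ℝ) be a C¹ solution of Ẋ = Xη(K' − ½XᵀσX) for a continuous symmetric-matrix-valued σ, and let V : [0,1] → GL(n,ℝ) solve V̇ = VηK − ηK'V. Then u := XV satisfies u̇ = uη(K − ½uᵀσu), provided Vᵀ η V = η (i.e., V takes values in the pseudo-orthogonal group O(n−k,k)). -/

import Mathlib

open Matrix

attribute [local instance] Matrix.linftyOpNormedAddCommGroup Matrix.linftyOpNormedSpace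
  Matrix.linftyOpNormedRing Matrix.linftyOpNormedAlgebra

/-- If `X` solves `Ẋ = Xη(K' − ½XᵀσX)` and `V` solves `V̇ = VηK − ηK'V` with
`VᵀηV = η` (so `V` takes values in the pseudo-orthogonal group `O(n−k,k)`), where `η`
is a signature matrix and `K, K'` are continuous skew-symmetric-matrix-valued, then
`u := XV` solves `u̇ = uη(K − ½uᵀσu)`. -/
theorem product_solves_orthonormalizing_ode
    (n : ℕ) (η : Matrix (Fin n) (Fin n) ℝ) (hηsymm : ηᵀ = η) (hη2 : η * η = 1)
    (K K' σ : ℝ → Matrix (Fin n) (Fin n) ℝ)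
    (hKcont : Continuous K) (hK'cont : Continuous K') (hσcont : Continuous σ)
    (hKskew : ∀ t, (K t)ᵀ = -K t) (hK'skew : ∀ t, (K' t)ᵀ = -K' t)
    (hσsymm : ∀ t, (σ t)ᵀ = σ t)
    (X V : ℝ → Matrix (Fin n) (Fin n) ℝ)
    (hX : ∀ t ∈ Set.Icc (0 : ℝ) 1,
      HasDerivAt X (X t * η * (K' t - (1 / 2 : ℝ) • ((X t)ᵀ * σ t * X t))) t)
    (hV : ∀ t ∈ Set.Icc (0 : ℝ) 1,
      HasDerivAt V (V t * η * K t - η * K' t * V t) t)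
    (hVorth : ∀ t, (V t)ᵀ * η * V t = η) :
    ∀ t ∈ Set.Icc (0 : ℝ) 1,
      HasDerivAt (fun t => X t * V t)
        ((X t * V t) * η *
          (K t - (1 / 2 : ℝ) • ((X t * V t)ᵀ * σ t * (X t * V t)))) t := by
  intro t ht
  have hmul : HasDerivAt (fun t => X t * V t) _ t := (hX t ht).mul (hV t ht)
  convert hmul using 1
  set A := X t
  set B := V t
  -- From `BᵀηB = η` deduce `BηBᵀ = η`.
  have hleft : (η * (B)ᵀ * η) * B = 1 := by
    have := hVorth t
    calc (η * Bᵀ * η) * B = η * (Bᵀ * η * B) := by noncomm_ring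
    _ = η * η := by rw [this]
    _ = 1 := hη2
  have hright : B * (η * (B)ᵀ * η) = 1 := mul_eq_one_comm.mp hleft
  have hBB : B * η * Bᵀ = η := by
    have : B * (η * Bᵀ * η) * η = 1 * η := by rw [hright]
    rw [one_mul] at this
    calc B * η * Bᵀ = B * (η * Bᵀ * η) * η := by
          rw [Matrix.mul_assoc, Matrix.mul_assoc, Matrix.mul_assoc, hη2, Matrix.mul_one]
    _ = η := this
  have key : A * B * η * (B)ᵀ = A * η := by
    rw [Matrix.mul_assoc, Matrix.mul_assoc, ← Matrix.mul_assoc B, hBB]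
  simp only [transpose_mul, mul_sub, sub_mul, Matrix.mul_smul, Matrix.smul_mul]
  rw [show A * B * η * (Bᵀ * Aᵀ * σ t * (A * B)) = A * B * η * Bᵀ * (Aᵀ * σ t * (A * B)) by
    noncomm_ring]
  rw [key]
  noncomm_ring
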